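/- Assume m ≥ 2 and let z ∈ ℂ satisfy z^m ≠ λ_j^m for every j. Then for every i ∈ ℤ/mℤ and all j, k ∈ {1,…,n}, the entry of the product Q̃·adj(z·1 − L̃) in row (i,j) and column (i,k) equals Q̃_{(i,j),(i−1,k)} · A(z) · z^{m−2} · λ_k/(z^m − λ_k^m), where Q̃_{(i,j),(i−1,k)} denotes the entry of Q̃ in row (i,j) and column (i−1,k). -/

import Mathlib

open Matrix BigOperators

noncomputable section

/-- The block matrix `L̃` with diagonal blocks `Λ = diag(λ₁,…,λₙ)` at positions `(h, h+1)`: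
its entry in row `(h,j)` and column `(i,k)` is `λⱼ` if `k = j` and `i = h + 1` in `ℤ/mℤ`,
and `0` otherwise. -/
def Ltilde (m n : ℕ) (lam : Fin n → ℂ) :
    Matrix (ZMod m × Fin n) (ZMod m × Fin n) ℂ :=
  Matrix.of fun p q => if q.2 = p.2 ∧ q.1 = p.1 + 1 then lam p.2 else 0

/-- `|g| = g₀ + g₁ + ⋯ + g_{m-1}`. -/
def gAbs (m : ℕ) (g : ZMod m → ℂ) : ℂ :=
  ∑ s ∈ Finset.range m, g (s : ZMod m)

/-- `cᵢ = Σ_{r=0}^{i} g_r − Σ_{s=0}^{m−1} ((m−s)/m)·g_s`, the index `i` read modulo `m`. -/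
def cConst (m : ℕ) (g : ZMod m → ℂ) (i : ZMod m) : ℂ :=
  (∑ r ∈ Finset.range (i.val + 1), g (r : ZMod m)) -
    ∑ s ∈ Finset.range m, (((m : ℂ) - (s : ℂ)) / (m : ℂ)) * g (s : ZMod m)

/-- The (spinless) matrix `Q̃`: its entry in row `(h,j)` and column `(i,k)` vanishes unless
`h = i + 1` in `ℤ/mℤ`, in which case it equals `φⱼ + cᵢ/λⱼ` if `k = j`, and
`−|g|·λⱼ^{m−i−1}·λₖ^{i}/(λⱼ^m − λₖ^m)` if `k ≠ j` (where `i` is taken as its representative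
in `{0,…,m−1}`). -/
def Qtilde (m n : ℕ) (g : ZMod m → ℂ) (lam phi : Fin n → ℂ) :
    Matrix (ZMod m × Fin n) (ZMod m × Fin n) ℂ :=
  Matrix.of fun p q =>
    if p.1 = q.1 + 1 then
      if q.2 = p.2 then phi p.2 + cConst m g q.1 / lam p.2
      else -(gAbs m g) * lam p.2 ^ (m - q.1.val - 1) * lam q.2 ^ q.1.val /
        (lam p.2 ^ m - lam q.2 ^ m)
    else 0

/-- `A(z) = det(z·1 − L̃)`. -/
def Afun (m n : ℕ) [NeZero m] (lam : Fin n → ℂ) (z : ℂ) : ℂ :=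
  (z • (1 : Matrix (ZMod m × Fin n) (ZMod m × Fin n) ℂ) - Ltilde m n lam).det

/-- `D(z) = tr(Q̃ · adj(z·1 − L̃))`. -/
def Dfun (m n : ℕ) [NeZero m] (g : ZMod m → ℂ) (lam phi : Fin n → ℂ) (z : ℂ) : ℂ :=
  Matrix.trace (Qtilde m n g lam phi *
    (z • (1 : Matrix (ZMod m × Fin n) (ZMod m × Fin n) ℂ) - Ltilde m n lam).adjugate)

/-- `C(z) = w̃ · Q̃ · adj(z·1 − L̃) · ṽ`, where `ṽ` has entry `1` at each index `(0,j)` and `0`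
elsewhere, and `w̃` has entry `|g|` at each index `(0,j)` and `0` elsewhere. -/
def Cfun (m n : ℕ) [NeZero m] (g : ZMod m → ℂ) (lam phi : Fin n → ℂ) (z : ℂ) : ℂ :=
  (fun p : ZMod m × Fin n => if p.1 = 0 then gAbs m g else 0) ⬝ᵥ
    ((Qtilde m n g lam phi *
        (z • (1 : Matrix (ZMod m × Fin n) (ZMod m × Fin n) ℂ) - Ltilde m n lam).adjugate) *ᵥ
      fun p : ZMod m × Fin n => if p.1 = 0 then (1 : ℂ) else 0)


lemma val_sub_one_aux (m : ℕ) [NeZero m] (d : ZMod m) (hd : d ≠ 0) : (d - 1).val = d.val - 1 := by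
  have h1 : 0 < d.val := Nat.pos_of_ne_zero (fun h => hd ((ZMod.val_eq_zero d).1 h))
  have hlt : d.val - 1 < m := lt_of_le_of_lt (Nat.sub_le _ _) d.val_lt
  have hcast : ((d.val - 1 : ℕ) : ZMod m) = d - 1 := by
    push_cast [Nat.cast_sub h1]
    simp [ZMod.natCast_val, ZMod.cast_id]
  rw [← hcast, ZMod.val_cast_of_lt hlt]

lemma neg_one_val_aux (m : ℕ) (hm : 2 ≤ m) : (-1 : ZMod m).val = m - 1 := by
  have : ((m - 1 : ℕ) : ZMod m) = -1 := by
    push_cast [Nat.cast_sub (by omega : 1 ≤ m)]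
    simp
  rw [← this, ZMod.val_cast_of_lt (by omega)]

/-- explicit inverse of `z•1 - L̃` (up to the determinant factor). -/
def Ninv (m n : ℕ) (lam : Fin n → ℂ) (z : ℂ) :
    Matrix (ZMod m × Fin n) (ZMod m × Fin n) ℂ :=
  Matrix.of fun p q =>
    if q.2 = p.2 then
      z ^ (m - 1 - (q.1 - p.1).val) * lam p.2 ^ (q.1 - p.1).val / (z ^ m - lam p.2 ^ m)
    else 0

lemma LN_apply (m n : ℕ) [NeZero m] (lam : Fin n → ℂ)
    (N : Matrix (ZMod m × Fin n) (ZMod m × Fin n) ℂ) (p q : ZMod m × Fin n) :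
    (Ltilde m n lam * N) p q = lam p.2 * N (p.1 + 1, p.2) q := by
  rw [Matrix.mul_apply]
  rw [Finset.sum_eq_single (p.1 + 1, p.2)]
  · simp [Ltilde]
  · rintro ⟨a, l⟩ - hx
    have : ¬(l = p.2 ∧ a = p.1 + 1) := by
      rintro ⟨rfl, rfl⟩; exact hx rfl
    simp [Ltilde, this]
  · intro h; exact absurd (Finset.mem_univ _) h

lemma MN_eq_one (m n : ℕ) [NeZero m] (hm : 2 ≤ m) (lam : Fin n → ℂ)
    (z : ℂ) (hz : ∀ j, z ^ m ≠ lam j ^ m) :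
    (z • (1 : Matrix (ZMod m × Fin n) (ZMod m × Fin n) ℂ) - Ltilde m n lam) *
      Ninv m n lam z = 1 := by
  ext p q
  rw [Matrix.sub_mul, Matrix.smul_mul, Matrix.one_mul, Matrix.sub_apply,
    Matrix.smul_apply, LN_apply, Matrix.one_apply]
  rcases p with ⟨h, j⟩
  rcases q with ⟨i, k⟩
  simp only [Ninv, Matrix.of_apply]
  by_cases hkj : k = j
  · subst hkj
    simp only [if_pos rfl]
    have hD : z ^ m - lam k ^ m ≠ 0 := sub_ne_zero.mpr (hz k)
    by_cases hih : i = h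
    · subst hih
      have h0 : (i - i : ZMod m) = 0 := sub_self i
      have hm1 : (i - (i + 1) : ZMod m) = -1 := by ring
      rw [h0, hm1, neg_one_val_aux m hm]
      simp only [ZMod.val_zero, Prod.mk.injEq, and_self, if_pos rfl]
      have e1 : m - 1 - (m - 1) = 0 := by omega
      rw [e1]
      field_simp
      have e2 : z * z ^ (m - 1) = z ^ m := by
        rw [← pow_succ']; congr 1; omega
      have e3 : lam k * lam k ^ (m - 1) = lam k ^ m := by
        rw [← pow_succ']; congr 1; omega
      simp only [if_true, tsub_zero, smul_eq_mul]
      rw [mul_div_assoc', mul_div_assoc', div_sub_div_same, e2, e3, div_self hD]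
    · have hd : (i - h : ZMod m) ≠ 0 := sub_ne_zero.mpr hih
      have hprod : (i - (h + 1) : ZMod m) = (i - h) - 1 := by ring
      rw [hprod, val_sub_one_aux m _ hd]
      set t := (i - h : ZMod m).val with ht
      have h1t : 1 ≤ t := Nat.pos_of_ne_zero (fun hh => hd ((ZMod.val_eq_zero _).1 hh))
      have htm : t < m := ZMod.val_lt _
      have hne : ¬((h, k) = (i, k) ) := by
        simp [Prod.ext_iff]; exact fun hh => hih hh.symm
      rw [if_neg hne]
      have e1 : m - 1 - (t - 1) = m - t := by omega
      have e2 : z * z ^ (m - 1 - t) = z ^ (m - t) := by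
        rw [← pow_succ']; congr 1; omega
      have e3 : lam k * lam k ^ (t - 1) = lam k ^ t := by
        rw [← pow_succ']; congr 1; omega
      simp only [if_pos rfl, e1, smul_eq_mul, if_true]
      linear_combination (lam k ^ t / (z ^ m - lam k ^ m)) * e2 -
        (z ^ (m - t) / (z ^ m - lam k ^ m)) * e3
  · have hkj' : ¬(j = k) := fun hh => hkj hh.symm
    have hne : ¬((h, j) = (i, k)) := by simp [Prod.ext_iff, hkj']
    simp [hkj, hne]

lemma adjugate_eq (m n : ℕ) [NeZero m] (hm : 2 ≤ m) (lam : Fin n → ℂ)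
    (z : ℂ) (hz : ∀ j, z ^ m ≠ lam j ^ m) :
    (z • (1 : Matrix (ZMod m × Fin n) (ZMod m × Fin n) ℂ) - Ltilde m n lam).adjugate =
      Afun m n lam z • Ninv m n lam z := by
  set M := z • (1 : Matrix (ZMod m × Fin n) (ZMod m × Fin n) ℂ) - Ltilde m n lam with hM
  calc M.adjugate = M.adjugate * (M * Ninv m n lam z) := by
        rw [MN_eq_one m n hm lam z hz, mul_one]
    _ = (M.adjugate * M) * Ninv m n lam z := by rw [Matrix.mul_assoc]
    _ = (M.det • 1) * Ninv m n lam z := by rw [Matrix.adjugate_mul]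
    _ = Afun m n lam z • Ninv m n lam z := by
        rw [Matrix.smul_mul, Matrix.one_mul]; rfl

/-- For `m ≥ 2` and `z` with `z^m ≠ λⱼ^m` for all `j`, the diagonal blocks of
`Q̃ · adj(z·1 − L̃)` are given by
`(Q̃ · adj(z·1 − L̃))_{(i,j),(i,k)} = Q̃_{(i,j),(i−1,k)} · A(z) · z^{m−2} · λₖ/(z^m − λₖ^m)`. -/
theorem diag_blocks_Q_adj (m n : ℕ) [NeZero m] (hm : 2 ≤ m) (hn : 0 < n)
    (lam phi : Fin n → ℂ) (g : ZMod m → ℂ)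
    (hlam : ∀ j, lam j ≠ 0)
    (hsep : ∀ j k : Fin n, j ≠ k → lam j ^ m ≠ lam k ^ m)
    (z : ℂ) (hz : ∀ j, z ^ m ≠ lam j ^ m) :
    ∀ (i : ZMod m) (j k : Fin n),
      (Qtilde m n g lam phi *
          (z • (1 : Matrix (ZMod m × Fin n) (ZMod m × Fin n) ℂ) -
            Ltilde m n lam).adjugate) (i, j) (i, k) =
        Qtilde m n g lam phi (i, j) (i - 1, k) * Afun m n lam z * z ^ (m - 2) * lam k /
          (z ^ m - lam k ^ m) := by
  intro i j k
  rw [adjugate_eq m n hm lam z hz, Matrix.mul_apply]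
  rw [Finset.sum_eq_single ((i - 1 : ZMod m), k)]
  · have h1 : (i - (i - 1) : ZMod m) = 1 := by ring
    haveI : Fact (1 < m) := ⟨by omega⟩
    simp only [Ninv, Matrix.smul_apply, Matrix.of_apply, h1, ZMod.val_one, if_pos rfl,
      smul_eq_mul, if_true]
    have e : m - 1 - 1 = m - 2 := by omega
    rw [e, pow_one]
    unfold Afun
    ring
  · rintro ⟨a, l⟩ - hx
    by_cases hl : k = l
    · subst hl
      have ha : ¬(i = a + 1) := by
        intro hh
        exact hx (by rw [hh]; simp)
      simp [Qtilde, ha]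
    · simp [Ninv, hl]
  · intro h; exact absurd (Finset.mem_univ _) h
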